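/- Let B be a finite connected band and k a commutative ring. Then the semigroup algebra kB has a two-sided identity element. -/

import Mathlib

open scoped Pointwise
open Classical

/-- The principal two-sided ideal `BbB = {u*b*v}` in a semigroup. -/
def prinIdeal {B : Type*} [Semigroup B] (b : B) : Set B := {z | ∃ u v : B, z = u * b * v}

/-- Connectivity of all the graphs `Γ_R(B,X)`: any two elements of the same support are
joined by a path whose steps join vertices of that support having a common upper bound
in the `R`-preorder (`a ≤_R b` iff `ba = a`). -/
def GammaRConnected (B : Type*) [Semigroup B] : Prop :=
  ∀ x x' : B, prinIdeal x = prinIdeal x' →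
    Relation.ReflTransGen
      (fun u v => prinIdeal u = prinIdeal v ∧ ∃ y : B, y * u = u ∧ y * v = v) x x'

/-- Connectivity of all the graphs `Γ_L(B,X)`: defined dually to `Γ_R` using the
`L`-preorder (`a ≤_L b` iff `ab = a`). -/
def GammaLConnected (B : Type*) [Semigroup B] : Prop :=
  ∀ x x' : B, prinIdeal x = prinIdeal x' →
    Relation.ReflTransGen
      (fun u v => prinIdeal u = prinIdeal v ∧ ∃ y : B, u * y = u ∧ v * y = v) x x'

section Band
variable {B : Type*} [Semigroup B]

theorem prin_self (hband : ∀ x : B, x * x = x) (a : B) : a ∈ prinIdeal a :=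
  ⟨a, a, by rw [hband a, hband a]⟩

theorem prin_mono {a c : B} (h : a ∈ prinIdeal c) : prinIdeal a ⊆ prinIdeal c := by
  obtain ⟨p, q, rfl⟩ := h
  rintro z ⟨s, t, rfl⟩
  exact ⟨s * p, q * t, by simp only [mul_assoc]⟩

theorem prin_sub_iff (hband : ∀ x : B, x * x = x) {a c : B} :
    prinIdeal a ⊆ prinIdeal c ↔ a ∈ prinIdeal c :=
  ⟨fun h => h (prin_self hband a), prin_mono⟩

theorem prin_mul_left (hband : ∀ x : B, x * x = x) (a b : B) :
    prinIdeal (a * b) ⊆ prinIdeal a :=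
  prin_mono ⟨a, b, by rw [hband]⟩

theorem prin_mul_right (hband : ∀ x : B, x * x = x) (a b : B) :
    prinIdeal (a * b) ⊆ prinIdeal b :=
  prin_mono ⟨a, b, by rw [mul_assoc, hband]⟩

theorem band_aca (hband : ∀ x : B, x * x = x) {a c : B} (h : a ∈ prinIdeal c) :
    a * c * a = a := by
  obtain ⟨p, q, rfl⟩ := h
  have k1 : ∀ z : B, z * c * q * c * q = z * c * q := by
    intro z
    calc z * c * q * c * q = z * ((c*q) * (c*q)) := by simp only [mul_assoc]
    _ = z * (c * q) := by rw [hband]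
    _ = z * c * q := by rw [mul_assoc]
  calc p*c*q * c * (p*c*q) = (p*c*q*c)*(p*c*q) := by simp only [mul_assoc]
  _ = (p*c*q*c)*(p*c*q*c*q) := by rw [k1]
  _ = ((p*c*q*c)*(p*c*q*c))*q := by simp only [mul_assoc]
  _ = (p*c*q*c)*q := by rw [hband]
  _ = p*c*q := k1 p

theorem prin_le_of_left (hband : ∀ x : B, x * x = x) {a y : B} (h : y * a = a) :
    a ∈ prinIdeal y :=
  ⟨y, a, by rw [hband y]; exact h.symm⟩

theorem prin_le_of_right (hband : ∀ x : B, x * x = x) {a y : B} (h : a * y = a) :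
    a ∈ prinIdeal y :=
  ⟨a, y, by rw [mul_assoc, hband y]; exact h.symm⟩

theorem prin_mul_class (hband : ∀ x : B, x * x = x) {a b : B}
    (h : prinIdeal a = prinIdeal b) : prinIdeal (a * b) = prinIdeal a := by
  apply Set.Subset.antisymm (prin_mul_left hband a b)
  rw [prin_sub_iff hband]
  have hab : a ∈ prinIdeal b := h ▸ prin_self hband a
  have key : a * b * a = a := band_aca hband hab
  exact ⟨a, a, by
    calc a = a*b*a := key.symm
    _ = (a*a)*b*a := by rw [hband]
    _ = a*(a*b)*a := by simp only [mul_assoc]⟩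

theorem band_rect (hband : ∀ x : B, x * x = x) {m a x b : B}
    (ha : prinIdeal a = prinIdeal m) (hx : prinIdeal x = prinIdeal m)
    (hb : prinIdeal b = prinIdeal m) : a * x * b = a * b := by
  have haxa : a * x * a = a := band_aca hband ((ha.trans hx.symm) ▸ prin_self hband a)
  have hbxb : b * x * b = b := band_aca hband ((hb.trans hx.symm) ▸ prin_self hband b)
  have hab : prinIdeal (a*b) = prinIdeal m := by
    rw [prin_mul_class hband (ha.trans hb.symm), ha]
  have hxab : x * (a*b) * x = x := band_aca hband ((hx.trans hab.symm) ▸ prin_self hband x)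
  calc a*x*b = a*(x*(a*b)*x)*b := by rw [hxab]
  _ = (a*x*a)*(b*x*b) := by simp only [mul_assoc]
  _ = a*b := by rw [haxa, hbxb]

end Band

section Alg
variable {B : Type*} [Semigroup B] {k : Type*} [CommRing k]

noncomputable def eps (b : B) : MonoidAlgebra k B := MonoidAlgebra.single b 1

theorem eps_mul (a b : B) : (eps a : MonoidAlgebra k B) * eps b = eps (a*b) := by
  simp [eps, MonoidAlgebra.single_mul_single]

omit [Semigroup B] in
theorem lin_ext (L : MonoidAlgebra k B →ₗ[k] MonoidAlgebra k B) {U T : Set B}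
    (h : ∀ s ∈ U, L (eps s) ∈ MonoidAlgebra.supported k k T) {f : MonoidAlgebra k B}
    (hf : f ∈ MonoidAlgebra.supported k k U) : L f ∈ MonoidAlgebra.supported k k T := by
  have hle : MonoidAlgebra.supported k k U ≤ Submodule.comap L (MonoidAlgebra.supported k k T) := by
    rw [MonoidAlgebra.supported_eq_span_single]
    apply Submodule.span_le.mpr
    rintro _ ⟨s, hs, rfl⟩
    exact h s hs
  exact hle hf

omit [Semigroup B] in
theorem eps_mem {T : Set B} {t : B} (ht : t ∈ T) :
    (eps t : MonoidAlgebra k B) ∈ MonoidAlgebra.supported k k T :=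
  MonoidAlgebra.mem_supported.2 (Finsupp.single_mem_supported k 1 ht)

omit [Semigroup B] in
theorem supp_empty : MonoidAlgebra.supported k k (∅ : Set B) = ⊥ := by
  ext x
  rw [MonoidAlgebra.mem_supported, Submodule.mem_bot, Set.subset_empty_iff, Finset.coe_eq_empty,
    Finsupp.support_eq_empty]
  exact ⟨fun h => by rw [← MonoidAlgebra.ofCoeff_coeff x, h]; rfl, fun h => by rw [h]; rfl⟩

theorem S_mul_left {U : Set B} (hU : ∀ s ∈ U, ∀ b : B, s*b ∈ U) {f : MonoidAlgebra k B}
    (hf : f ∈ MonoidAlgebra.supported k k U) (g : MonoidAlgebra k B) :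
    f * g ∈ MonoidAlgebra.supported k k U := by
  rw [MonoidAlgebra.mem_supported] at hf ⊢
  intro x hx
  obtain ⟨a, ha, b, _, rfl⟩ := Finset.mem_mul.mp (MonoidAlgebra.support_coeff_mul_subset f g hx)
  exact hU a (hf ha) b

theorem S_mul_right {U : Set B} (hU : ∀ s ∈ U, ∀ b : B, b*s ∈ U) {f : MonoidAlgebra k B}
    (hf : f ∈ MonoidAlgebra.supported k k U) (g : MonoidAlgebra k B) :
    g * f ∈ MonoidAlgebra.supported k k U := by
  rw [MonoidAlgebra.mem_supported] at hf ⊢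
  intro x hx
  obtain ⟨a, _, b, hb, rfl⟩ := Finset.mem_mul.mp (MonoidAlgebra.support_coeff_mul_subset g f hx)
  exact hU b (hf hb) a

/-- LEFT propagation claim. -/
theorem claimL (hband : ∀ x : B, x * x = x) (hR : GammaRConnected B)
    {T : Set B} (hT : ∀ ⦃b c : B⦄, b ∈ T → prinIdeal c ⊆ prinIdeal b → c ∈ T)
    {m : B}
    (u : MonoidAlgebra k B)
    (HU : ∀ b : B, u * eps b - eps b ∈
      MonoidAlgebra.supported k k (T ∪ {c | prinIdeal c = prinIdeal m}))
    {d : B} (hd : prinIdeal d = prinIdeal m) :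
    (u * eps d - eps d) - (u * eps m - eps m) * eps d ∈ MonoidAlgebra.supported k k T := by
  set U : Set B := T ∪ {c | prinIdeal c = prinIdeal m} with hUdef
  -- step lemma for edges
  have edge : ∀ a c : B, prinIdeal a = prinIdeal m → prinIdeal c = prinIdeal m →
      (∃ y : B, y * a = a ∧ y * c = c) →
      (u * eps a - eps a) * eps d - (u * eps c - eps c) * eps d ∈ MonoidAlgebra.supported k k T := by
    rintro a c ham hcm ⟨y, hya, hyc⟩
    have key : ∀ w : B, y * w = w →
        (u * eps w - eps w) * (eps d : MonoidAlgebra k B)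
          = (u * eps y - eps y) * eps (w * d) := by
      intro w hyw
      have : (eps w : MonoidAlgebra k B) = eps y * eps w := by rw [eps_mul, hyw]
      calc (u * eps w - eps w) * eps d = u * (eps w * eps d) - eps w * eps d := by
            rw [sub_mul, mul_assoc]
      _ = u * (eps y * eps (w*d)) - eps y * eps (w*d) := by
            rw [this]; simp only [mul_assoc, eps_mul]
      _ = (u * eps y - eps y) * eps (w * d) := by rw [sub_mul, mul_assoc]
    rw [key a hya, key c hyc]
    have : (u * eps y - eps y) * eps (a*d) - (u * eps y - eps y) * eps (c*d)
        = (LinearMap.mulRight k ((eps (a*d) : MonoidAlgebra k B) - eps (c*d)))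
            (u * eps y - eps y) := by
      simp only [LinearMap.mulRight_apply, mul_sub]
    rw [this]
    apply lin_ext _ _ (HU y)
    intro s hs
    simp only [LinearMap.mulRight_apply, mul_sub, eps_mul]
    rcases hs with hsT | hsZ
    · exact Submodule.sub_mem _
        (eps_mem (hT hsT (prin_mul_left hband s (a*d))))
        (eps_mem (hT hsT (prin_mul_left hband s (c*d))))
    · have hsm : prinIdeal s = prinIdeal m := hsZ
      have h1 : s * (a*d) = s * d := by
        rw [← mul_assoc, band_rect hband hsm ham hd]
      have h2 : s * (c*d) = s * d := by
        rw [← mul_assoc, band_rect hband hsm hcm hd]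
      rw [h1, h2, sub_self]
      exact Submodule.zero_mem _
  -- path induction
  have path := hR d m hd
  have main : ∀ c : B, Relation.ReflTransGen
      (fun u v => prinIdeal u = prinIdeal v ∧ ∃ y : B, y * u = u ∧ y * v = v) c m →
      prinIdeal c = prinIdeal m ∧
      ((u * eps c - eps c) * eps d - (u * eps m - eps m) * eps d
        ∈ MonoidAlgebra.supported k k T) := by
    intro c hc
    induction hc using Relation.ReflTransGen.head_induction_on with
    | refl => exact ⟨rfl, by rw [sub_self]; exact Submodule.zero_mem _⟩
    | @head a c h' _ ih =>
      obtain ⟨hac, y, hya, hyc⟩ := h'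
      obtain ⟨hcm, hmem⟩ := ih
      refine ⟨hac.trans hcm, ?_⟩
      have e1 := edge a c (hac.trans hcm) hcm ⟨y, hya, hyc⟩
      have : (u * eps a - eps a) * eps d - (u * eps m - eps m) * eps d
          = ((u * eps a - eps a) * eps d - (u * eps c - eps c) * eps d)
            + ((u * eps c - eps c) * eps d - (u * eps m - eps m) * eps d) := by abel
      rw [this]
      exact Submodule.add_mem _ e1 hmem
  obtain ⟨_, hmem⟩ := main d path
  have hdd : (u * eps d - eps d) * (eps d : MonoidAlgebra k B) = u * eps d - eps d := by
    rw [sub_mul, mul_assoc, eps_mul, hband d]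
  rwa [hdd] at hmem

/-- RIGHT propagation claim (mirror). -/
theorem claimR (hband : ∀ x : B, x * x = x) (hL : GammaLConnected B)
    {T : Set B} (hT : ∀ ⦃b c : B⦄, b ∈ T → prinIdeal c ⊆ prinIdeal b → c ∈ T)
    {m : B}
    (u : MonoidAlgebra k B)
    (HU : ∀ b : B, eps b * u - eps b ∈
      MonoidAlgebra.supported k k (T ∪ {c | prinIdeal c = prinIdeal m}))
    {d : B} (hd : prinIdeal d = prinIdeal m) :
    (eps d * u - eps d) - eps d * (eps m * u - eps m) ∈ MonoidAlgebra.supported k k T := by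
  have edge : ∀ a c : B, prinIdeal a = prinIdeal m → prinIdeal c = prinIdeal m →
      (∃ y : B, a * y = a ∧ c * y = c) →
      eps d * (eps a * u - eps a) - eps d * (eps c * u - eps c) ∈ MonoidAlgebra.supported k k T := by
    rintro a c ham hcm ⟨y, hya, hyc⟩
    have key : ∀ w : B, w * y = w →
        (eps d : MonoidAlgebra k B) * (eps w * u - eps w)
          = eps (d * w) * (eps y * u - eps y) := by
      intro w hyw
      have h3 : (eps (d*w) : MonoidAlgebra k B) * eps y = eps (d*w) := by
        rw [eps_mul, mul_assoc, hyw]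
      calc (eps d : MonoidAlgebra k B) * (eps w * u - eps w)
          = eps (d*w) * u - eps (d*w) := by
            rw [mul_sub, ← mul_assoc, eps_mul]
      _ = eps (d*w) * (eps y * u) - eps (d*w) * eps y := by
            rw [← mul_assoc, h3]
      _ = eps (d * w) * (eps y * u - eps y) := by rw [mul_sub]
    rw [key a hya, key c hyc]
    have hrew : eps (d*a) * (eps y * u - eps y) - eps (d*c) * (eps y * u - eps y)
        = (LinearMap.mulLeft k ((eps (d*a) : MonoidAlgebra k B) - eps (d*c)))
            (eps y * u - eps y) := by
      simp only [LinearMap.mulLeft_apply, sub_mul]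
    rw [hrew]
    apply lin_ext _ _ (HU y)
    intro s hs
    simp only [LinearMap.mulLeft_apply, sub_mul, eps_mul]
    rcases hs with hsT | hsZ
    · exact Submodule.sub_mem _
        (eps_mem (hT hsT (prin_mul_right hband (d*a) s)))
        (eps_mem (hT hsT (prin_mul_right hband (d*c) s)))
    · have hsm : prinIdeal s = prinIdeal m := hsZ
      have h1 : d * a * s = d * s := band_rect hband hd ham hsm
      have h2 : d * c * s = d * s := band_rect hband hd hcm hsm
      rw [h1, h2, sub_self]
      exact Submodule.zero_mem _
  have path := hL d m hd
  have main : ∀ c : B, Relation.ReflTransGen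
      (fun u v => prinIdeal u = prinIdeal v ∧ ∃ y : B, u * y = u ∧ v * y = v) c m →
      prinIdeal c = prinIdeal m ∧
      (eps d * (eps c * u - eps c) - eps d * (eps m * u - eps m)
        ∈ MonoidAlgebra.supported k k T) := by
    intro c hc
    induction hc using Relation.ReflTransGen.head_induction_on with
    | refl => exact ⟨rfl, by rw [sub_self]; exact Submodule.zero_mem _⟩
    | @head a c h' _ ih =>
      obtain ⟨hac, y, hya, hyc⟩ := h'
      obtain ⟨hcm, hmem⟩ := ih
      refine ⟨hac.trans hcm, ?_⟩
      have e1 := edge a c (hac.trans hcm) hcm ⟨y, hya, hyc⟩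
      have hsplit : eps d * (eps a * u - eps a) - eps d * (eps m * u - eps m)
          = (eps d * (eps a * u - eps a) - eps d * (eps c * u - eps c))
            + (eps d * (eps c * u - eps c) - eps d * (eps m * u - eps m)) := by abel
      rw [hsplit]
      exact Submodule.add_mem _ e1 hmem
  obtain ⟨_, hmem⟩ := main d path
  have hdd : (eps d : MonoidAlgebra k B) * (eps d * u - eps d) = eps d * u - eps d := by
    rw [mul_sub, ← mul_assoc, eps_mul, hband d]
  rwa [hdd] at hmem

end Alg

section Core
variable {B : Type*} [Semigroup B] [Fintype B] {k : Type*} [CommRing k]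

theorem core (hband : ∀ x : B, x * x = x) (hR : GammaRConnected B) (hL : GammaLConnected B) :
    ∀ (n : ℕ) (T : Set B), (∀ ⦃b c : B⦄, b ∈ T → prinIdeal c ⊆ prinIdeal b → c ∈ T) →
      (Tᶜ).ncard ≤ n →
      ∃ v : MonoidAlgebra k B, ∀ b : B,
        (v * eps b - eps b ∈ MonoidAlgebra.supported k k T) ∧
        (eps b * v - eps b ∈ MonoidAlgebra.supported k k T) := by
  intro n
  induction n with
  | zero =>
    intro T _ hn
    have hTc : Tᶜ = ∅ := (Set.ncard_eq_zero (Set.toFinite _)).mp (Nat.le_zero.mp hn)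
    have hT : T = Set.univ := by
      rw [← Set.compl_empty_iff]; exact hTc
    refine ⟨0, fun b => ⟨?_, ?_⟩⟩ <;>
      (rw [hT]; exact MonoidAlgebra.mem_supported.2 (Set.subset_univ _))
  | succ n ih =>
    intro T hT hn
    by_cases hTc : Tᶜ = ∅
    · have hTu : T = Set.univ := by rw [← Set.compl_empty_iff]; exact hTc
      refine ⟨0, fun b => ⟨?_, ?_⟩⟩ <;>
        (rw [hTu]; exact MonoidAlgebra.mem_supported.2 (Set.subset_univ _))
    · obtain ⟨m, hmTc, hmin⟩ : ∃ m ∈ Tᶜ, ∀ a' ∈ Tᶜ, prinIdeal a' ≤ prinIdeal m →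
          prinIdeal m = prinIdeal a' := by
        obtain ⟨m, hm1, hm2⟩ := Set.Finite.exists_minimalFor prinIdeal (Tᶜ)
          (Set.toFinite _) (Set.nonempty_iff_ne_empty.mpr hTc)
        exact ⟨m, hm1, fun a' ha' hle => le_antisymm (hm2 ha' hle) hle⟩
      set T' : Set B := T ∪ {c | prinIdeal c = prinIdeal m} with hT'def
      have hmT : m ∉ T := hmTc
      -- T' is down-closed
      have hT' : ∀ ⦃b c : B⦄, b ∈ T' → prinIdeal c ⊆ prinIdeal b → c ∈ T' := by
        rintro b c (hb | hb) hcb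
        · exact Or.inl (hT hb hcb)
        · by_cases hc : c ∈ T
          · exact Or.inl hc
          · have : prinIdeal c ⊆ prinIdeal m := by
              rw [← hb]; exact hcb
            exact Or.inr ((hmin c hc this).symm)
      -- cardinality decreases
      have hcard : (T'ᶜ).ncard ≤ n := by
        have hss : T'ᶜ ⊂ Tᶜ := by
          rw [Set.ssubset_def]
          constructor
          · exact Set.compl_subset_compl.mpr Set.subset_union_left
          · intro hsub
            exact (hsub hmTc) (Or.inr rfl)
        have := Set.ncard_lt_ncard hss (Set.toFinite _)
        omega
      obtain ⟨u, hu⟩ := ih T' hT' hcard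
      -- closure facts
      have habsTL : ∀ s ∈ T, ∀ b : B, s * b ∈ T := fun s hs b =>
        hT hs (prin_mul_left hband s b)
      have habsTR : ∀ s ∈ T, ∀ b : B, b * s ∈ T := fun s hs b =>
        hT hs (prin_mul_right hband b s)
      have habsL : ∀ s ∈ T', ∀ b : B, s * b ∈ T' := by
        rintro s (hs | hs) b
        · exact Or.inl (habsTL s hs b)
        · by_cases hsb : s * b ∈ T
          · exact Or.inl hsb
          · have : prinIdeal (s*b) ⊆ prinIdeal m := by
              rw [← hs]; exact prin_mul_left hband s b
            exact Or.inr ((hmin (s*b) hsb this).symm)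
      have habsR : ∀ s ∈ T', ∀ b : B, b * s ∈ T' := by
        rintro s (hs | hs) b
        · exact Or.inl (habsTR s hs b)
        · by_cases hsb : b * s ∈ T
          · exact Or.inl hsb
          · have : prinIdeal (b*s) ⊆ prinIdeal m := by
              rw [← hs]; exact prin_mul_right hband b s
            exact Or.inr ((hmin (b*s) hsb this).symm)
      -- normalize left
      obtain ⟨u₁, hu₁def⟩ : ∃ w : MonoidAlgebra k B, w = u - (u * eps m - eps m) := ⟨_, rfl⟩
      have hu1L : ∀ d : B, prinIdeal d = prinIdeal m →
          u₁ * eps d - eps d ∈ MonoidAlgebra.supported k k T := by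
        intro d hd
        have hcl := claimL hband hR hT u (fun b => (hu b).1) hd
        have : u₁ * eps d - eps d
            = (u * eps d - eps d) - (u * eps m - eps m) * eps d := by
          rw [hu₁def, sub_mul]; abel
        rw [this]; exact hcl
      have hu1G : ∀ b : B, (u₁ * eps b - eps b ∈ MonoidAlgebra.supported k k T') ∧
          (eps b * u₁ - eps b ∈ MonoidAlgebra.supported k k T') := by
        intro b
        have hDm : u * eps m - eps m ∈ MonoidAlgebra.supported k k T' := (hu m).1
        constructor
        · have : u₁ * eps b - eps b
              = (u * eps b - eps b) - (u * eps m - eps m) * eps b := by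
            rw [hu₁def, sub_mul]; abel
          rw [this]
          exact Submodule.sub_mem _ (hu b).1 (S_mul_left habsL hDm _)
        · have : eps b * u₁ - eps b
              = (eps b * u - eps b) - eps b * (u * eps m - eps m) := by
            rw [hu₁def, mul_sub]; abel
          rw [this]
          exact Submodule.sub_mem _ (hu b).2 (S_mul_right habsR hDm _)
      -- normalize right
      obtain ⟨u₂, hu₂def⟩ : ∃ w : MonoidAlgebra k B, w = u₁ - (eps m * u₁ - eps m) := ⟨_, rfl⟩
      have hu2R : ∀ d : B, prinIdeal d = prinIdeal m →
          eps d * u₂ - eps d ∈ MonoidAlgebra.supported k k T := by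
        intro d hd
        have hcr := claimR hband hL hT u₁ (fun b => (hu1G b).2) hd
        have : eps d * u₂ - eps d
            = (eps d * u₁ - eps d) - eps d * (eps m * u₁ - eps m) := by
          rw [hu₂def, mul_sub]; abel
        rw [this]; exact hcr
      have hu2L : ∀ d : B, prinIdeal d = prinIdeal m →
          u₂ * eps d - eps d ∈ MonoidAlgebra.supported k k T := by
        intro d hd
        have h1 := hu1L d hd
        have hkey : ∀ w : MonoidAlgebra k B,
            (eps m * w - eps m) * eps d = eps m * (w * eps d - eps d) := by
          intro w
          rw [sub_mul, mul_sub, mul_assoc]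
        have : u₂ * eps d - eps d
            = (u₁ * eps d - eps d) - eps m * (u₁ * eps d - eps d) := by
          rw [hu₂def, sub_mul, hkey u₁]; abel
        rw [this]
        exact Submodule.sub_mem _ h1 (S_mul_right habsTR h1 _)
      have hu2G : ∀ b : B, (u₂ * eps b - eps b ∈ MonoidAlgebra.supported k k T') ∧
          (eps b * u₂ - eps b ∈ MonoidAlgebra.supported k k T') := by
        intro b
        have hPm : eps m * u₁ - eps m ∈ MonoidAlgebra.supported k k T' := (hu1G m).2
        constructor
        · have : u₂ * eps b - eps b
              = (u₁ * eps b - eps b) - (eps m * u₁ - eps m) * eps b := by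
            rw [hu₂def, sub_mul]; abel
          rw [this]
          exact Submodule.sub_mem _ (hu1G b).1 (S_mul_left habsL hPm _)
        · have : eps b * u₂ - eps b
              = (eps b * u₁ - eps b) - eps b * (eps m * u₁ - eps m) := by
            rw [hu₂def, mul_sub]; abel
          rw [this]
          exact Submodule.sub_mem _ (hu1G b).2 (S_mul_right habsR hPm _)
      -- u₂-stability over S T'
      have prop5L : ∀ w : MonoidAlgebra k B, w ∈ MonoidAlgebra.supported k k T' →
          u₂ * w - w ∈ MonoidAlgebra.supported k k T := by
        intro w hw
        have := lin_ext (LinearMap.mulLeft k u₂ - LinearMap.id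
            : MonoidAlgebra k B →ₗ[k] MonoidAlgebra k B) (T := T) (U := T') ?_ hw
        · simpa using this
        · rintro s (hs | hs)
          · simp only [LinearMap.sub_apply, LinearMap.mulLeft_apply, LinearMap.id_apply]
            exact Submodule.sub_mem _
              (S_mul_right habsTR (eps_mem hs) u₂) (eps_mem hs)
          · simp only [LinearMap.sub_apply, LinearMap.mulLeft_apply, LinearMap.id_apply]
            exact hu2L s hs
      have prop5R : ∀ w : MonoidAlgebra k B, w ∈ MonoidAlgebra.supported k k T' →
          w * u₂ - w ∈ MonoidAlgebra.supported k k T := by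
        intro w hw
        have := lin_ext (LinearMap.mulRight k u₂ - LinearMap.id
            : MonoidAlgebra k B →ₗ[k] MonoidAlgebra k B) (T := T) (U := T') ?_ hw
        · simpa using this
        · rintro s (hs | hs)
          · simp only [LinearMap.sub_apply, LinearMap.mulRight_apply, LinearMap.id_apply]
            exact Submodule.sub_mem _
              (S_mul_left habsTL (eps_mem hs) u₂) (eps_mem hs)
          · simp only [LinearMap.sub_apply, LinearMap.mulRight_apply, LinearMap.id_apply]
            exact hu2R s hs
      -- the improved element
      refine ⟨u₂ + u₂ - u₂ * u₂, fun b => ⟨?_, ?_⟩⟩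
      · have hw : u₂ * eps b - eps b ∈ MonoidAlgebra.supported k k T' := (hu2G b).1
        have hform : (u₂ + u₂ - u₂ * u₂) * eps b - eps b
            = -(u₂ * (u₂ * eps b - eps b) - (u₂ * eps b - eps b)) := by
          simp only [sub_mul, add_mul, mul_sub, mul_assoc]; abel
        rw [hform]
        exact Submodule.neg_mem _ (prop5L _ hw)
      · have hw : eps b * u₂ - eps b ∈ MonoidAlgebra.supported k k T' := (hu2G b).2
        have hform : eps b * (u₂ + u₂ - u₂ * u₂) - eps b
            = -((eps b * u₂ - eps b) * u₂ - (eps b * u₂ - eps b)) := by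
          simp only [mul_sub, mul_add, sub_mul, mul_assoc]; abel
        rw [hform]
        exact Submodule.neg_mem _ (prop5R _ hw)

end Core

/-- The semigroup algebra of a finite connected band over any commutative ring has a
two-sided identity. -/
theorem connected_band_algebra_unital {B : Type*} [Semigroup B] [Fintype B]
    (hband : ∀ x : B, x * x = x) (hR : GammaRConnected B) (hL : GammaLConnected B)
    (k : Type*) [CommRing k] :
    ∃ e : MonoidAlgebra k B, ∀ f : MonoidAlgebra k B, e * f = f ∧ f * e = f := by
  obtain ⟨v, hv⟩ := core (k := k) hband hR hL ((∅ : Set B)ᶜ).ncard ∅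
    (fun b c hb _ => hb.elim) le_rfl
  have hvb : ∀ b : B, v * eps b = eps b ∧ eps b * v = eps b := by
    intro b
    obtain ⟨h1, h2⟩ := hv b
    rw [supp_empty, Submodule.mem_bot, sub_eq_zero] at h1 h2
    exact ⟨h1, h2⟩
  refine ⟨v, fun f => ⟨?_, ?_⟩⟩
  · have : (LinearMap.mulLeft k v - LinearMap.id :
        MonoidAlgebra k B →ₗ[k] MonoidAlgebra k B) f ∈ MonoidAlgebra.supported k k (∅ : Set B) := by
      apply lin_ext (U := Set.univ)
      · intro s _
        simp only [LinearMap.sub_apply, LinearMap.mulLeft_apply, LinearMap.id_apply,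
          (hvb s).1, sub_self]
        exact Submodule.zero_mem _
      · exact MonoidAlgebra.mem_supported.2 (Set.subset_univ _)
    rw [supp_empty, Submodule.mem_bot] at this
    simpa [sub_eq_zero] using this
  · have : (LinearMap.mulRight k v - LinearMap.id :
        MonoidAlgebra k B →ₗ[k] MonoidAlgebra k B) f ∈ MonoidAlgebra.supported k k (∅ : Set B) := by
      apply lin_ext (U := Set.univ)
      · intro s _
        simp only [LinearMap.sub_apply, LinearMap.mulRight_apply, LinearMap.id_apply,
          (hvb s).2, sub_self]
        exact Submodule.zero_mem _
      · exact MonoidAlgebra.mem_supported.2 (Set.subset_univ _)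
    rw [supp_empty, Submodule.mem_bot] at this
    simpa [sub_eq_zero] using this
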